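/- Let C be a complete, locally small category. The category of limit-preserving functors from Set^op to C is equivalent to C itself, via evaluation at the singleton set. -/

import Mathlib

open CategoryTheory CategoryTheory.Limits

universe v u

variable {C : Type u} [Category.{v} C] [HasLimitsOfSize.{v, v} C]

/-- The power functor `S ↦ X^S`. -/
@[simps, reducible]
noncomputable def myPow (X : C) : (Type v)ᵒᵖ ⥤ C where
  obj S := ∏ᶜ fun (_ : S.unop) => X
  map {S T} f := Pi.lift fun t => Pi.π (fun (_ : S.unop) => X) (f.unop t)
  map_id S := by ext t; simp
  map_comp f g := by ext t; simp

noncomputable def myPowAdj (X : C) : (yoneda.obj X).rightOp ⊣ myPow X :=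
  Adjunction.mkOfHomEquiv
    { homEquiv := fun A S =>
        { toFun := fun f => Pi.lift fun s => f.unop s
          invFun := fun g => Quiver.Hom.op (TypeCat.ofHom fun s => g ≫ Pi.π _ s)
          left_inv := fun f => by
            apply Quiver.Hom.unop_inj; ext s; simp
          right_inv := fun g => by apply Pi.hom_ext; intro s; simp }
      homEquiv_naturality_left_symm := by
        intro A A' S f g
        apply Quiver.Hom.unop_inj; ext s; simp
      homEquiv_naturality_right := by
        intro A S S' f g
        apply Pi.hom_ext; intro s; simp }

instance myPowPreserves (X : C) : PreservesLimitsOfSize.{v, v} (myPow X) :=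
  (myPowAdj X).rightAdjoint_preservesLimits

/-- The fan exhibiting `op S` as the `S`-fold power of `op PUnit` in `(Type v)ᵒᵖ`. -/
def singletonFan (S : Type v) : Fan (fun (_ : S) => Opposite.op (PUnit.{v+1})) :=
  Fan.mk (Opposite.op S) (fun s => Quiver.Hom.op (TypeCat.ofHom fun (_ : PUnit) => s))

def singletonFanIsLimit (S : Type v) : IsLimit (singletonFan S) :=
  mkFanLimit _
    (fun c => Quiver.Hom.op (TypeCat.ofHom fun s => (c.proj s).unop PUnit.unit))
    (fun c s => by
      apply Quiver.Hom.unop_inj; ext u; cases u; rfl)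
    (fun c m hm => by
      apply Quiver.Hom.unop_inj; ext s
      exact congrArg (fun (f : c.pt ⟶ Opposite.op PUnit) => f.unop PUnit.unit) (hm s))

/-- The comparison morphism `F(S) ⟶ F(*)^S`. -/
noncomputable def powCmp (F : (Type v)ᵒᵖ ⥤ C) (S : (Type v)ᵒᵖ) :
    F.obj S ⟶ (myPow (F.obj (Opposite.op PUnit.{v+1}))).obj S :=
  Pi.lift fun s => F.map (Quiver.Hom.op (TypeCat.ofHom fun (_ : PUnit) => s))

noncomputable def powCmpNat (F : (Type v)ᵒᵖ ⥤ C) :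
    F ⟶ myPow (F.obj (Opposite.op PUnit.{v+1})) where
  app S := powCmp F S
  naturality S T f := by
    apply Pi.hom_ext; intro t
    simp only [powCmp, Category.assoc, limit.lift_π, Fan.mk_π_app, myPow_map]
    rw [← F.map_comp]; rfl

instance powCmpIsIso (F : (Type v)ᵒᵖ ⥤ C) [PreservesLimitsOfSize.{v, v} F] (S : (Type v)ᵒᵖ) :
    IsIso (powCmp F S) := by
  obtain ⟨S⟩ := S
  have hS : IsLimit (Fan.mk (F.obj (Opposite.op S))
      (fun s => F.map (Quiver.Hom.op (TypeCat.ofHom fun (_ : PUnit.{v+1}) => s)))) :=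
    isLimitFanMkObjOfIsLimit F _ _ (singletonFanIsLimit S)
  have : powCmp F (Opposite.op S) =
      (hS.conePointUniqueUpToIso (limit.isLimit _)).hom := by
    apply Pi.hom_ext; intro s
    simp [powCmp]
  rw [this]
  infer_instance

/-- The power bifunctor. -/
@[simps, reducible]
noncomputable def PowBase : C ⥤ ((Type v)ᵒᵖ ⥤ C) where
  obj X := myPow X
  map {X Y} f :=
    { app := fun S => Limits.Pi.map fun _ => f
      naturality := fun S T g => by
        apply Pi.hom_ext; intro t; simp }
  map_id X := by
    ext S : 2
    apply Pi.hom_ext; intro s; simp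
  map_comp f g := by
    ext S : 2
    apply Pi.hom_ext; intro s; simp

/-- The inverse functor `C ⥤ Set(C)`. -/
noncomputable def PowF : C ⥤ ObjectProperty.FullSubcategory
    (fun F : (Type v)ᵒᵖ ⥤ C => PreservesLimitsOfSize.{v, v} F) :=
  ObjectProperty.lift _ PowBase myPowPreserves

noncomputable def theUnitApp (F : ObjectProperty.FullSubcategory
    (fun F : (Type v)ᵒᵖ ⥤ C => PreservesLimitsOfSize.{v, v} F)) :
    F ≅ ((ObjectProperty.ι _ ⋙
      (evaluation (Type v)ᵒᵖ C).obj (Opposite.op PUnit)) ⋙ PowF).obj F := by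
  haveI : PreservesLimitsOfSize.{v, v} F.obj := F.property
  haveI : ∀ S, IsIso ((powCmpNat F.obj).app S) := fun S => powCmpIsIso F.obj S
  haveI : IsIso (powCmpNat F.obj) := NatIso.isIso_of_isIso_app _
  exact (ObjectProperty.ι _).preimageIso (@asIso _ _ _ _ (powCmpNat F.obj) this)

/-- Let `C` be a complete, locally small category. The category `Set(C)` of
internal `Set`-objects in `C` (the full subcategory of `Funct(Setᵒᵖ, C)` on the
limit-preserving functors) is equivalent to `C` itself, via evaluation at the
singleton set. -/
theorem stmt1 {C : Type u} [Category.{v} C] [HasLimitsOfSize.{v, v} C] :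
    (ObjectProperty.ι (fun F : (Type v)ᵒᵖ ⥤ C => PreservesLimitsOfSize.{v, v} F) ⋙
      (evaluation (Type v)ᵒᵖ C).obj (Opposite.op PUnit)).IsEquivalence := by
  apply Functor.IsEquivalence.mk' PowF
  · -- unit
    exact NatIso.ofComponents theUnitApp (fun {F G} u => by
      apply (ObjectProperty.ι _).map_injective
      simp only [Functor.map_comp, theUnitApp]
      simp only [Functor.preimageIso_hom, Functor.map_preimage]
      ext S
      apply Pi.hom_ext; intro s
      simp [powCmpNat, powCmp, PowF, ObjectProperty.lift])
  · -- counit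
    exact NatIso.ofComponents
      (fun X => { hom := Pi.π (fun (_ : PUnit.{v+1}) => X) PUnit.unit
                  inv := Pi.lift fun _ => 𝟙 X
                  hom_inv_id := by
                    apply Pi.hom_ext; intro s
                    cases s; exact (Category.assoc _ _ _).trans ((congrArg _ (Pi.lift_π _ _)).trans ((Category.comp_id _).trans (Category.id_comp _).symm))
                  inv_hom_id := by exact Pi.lift_π _ _ })
      (fun {X Y} f => by simp [PowF, ObjectProperty.lift])
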